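/- The closed linear span I = cl span{μ_x(a) − μ_y(α_{y−x}(a)) : x < y ∈ Γ, a ∈ A} is a closed two-sided ideal of the C*-algebra B = cl span{μ_x(a) : x ∈ Γ, a ∈ A}. -/

import Mathlib

open scoped ENNReal

variable {Γ : Type*} [AddCommGroup Γ] [LinearOrder Γ] [IsOrderedAddMonoid Γ] {A : Type*} [NonUnitalCStarAlgebra A]

/-- The map `μ_x : A → ℓ∞(Γ, A)`, `(μ_x a)(y) = α_{y-x}(a)` for `y ≥ x` and `0` otherwise. -/
noncomputable def mu (α : Γ → (A →⋆ₙₐ[ℂ] A)) (x : Γ) (a : A) :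
    lp (fun _ : Γ => A) ∞ :=
  ⟨fun y => if x ≤ y then α (y - x) a else 0,
    memℓp_infty ⟨‖a‖, by
      rintro r ⟨y, rfl⟩
      dsimp only
      split_ifs
      · exact NonUnitalStarAlgHom.norm_apply_le _ _
      · simp⟩⟩

/-- The C*-subalgebra `B = cl span {μ_x(a) : x ∈ Γ, a ∈ A}` of `ℓ∞(Γ, A)`, as a subset. -/
noncomputable def BSet (α : Γ → (A →⋆ₙₐ[ℂ] A)) : Set (lp (fun _ : Γ => A) ∞) :=
  closure (Submodule.span ℂ {ξ : lp (fun _ : Γ => A) ∞ | ∃ x a, ξ = mu α x a} : Set _)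

/-- The ideal `I = cl span {μ_x(a) - μ_y(α_{y-x}(a)) : x < y ∈ Γ, a ∈ A}`, as a subset. -/
noncomputable def ISet (α : Γ → (A →⋆ₙₐ[ℂ] A)) : Set (lp (fun _ : Γ => A) ∞) :=
  closure (Submodule.span ℂ
    {ξ : lp (fun _ : Γ => A) ∞ | ∃ x y a, x < y ∧ ξ = mu α x a - mu α y (α (y - x) a)} : Set _)

theorem mu_apply (α : Γ → (A →⋆ₙₐ[ℂ] A)) (x : Γ) (a : A) (y : Γ) :
    (mu α x a : ∀ _ : Γ, A) y = if x ≤ y then α (y - x) a else 0 := rfl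

theorem mu_mul (α : Γ → (A →⋆ₙₐ[ℂ] A))
    (hαadd : ∀ s t : Γ, 0 ≤ s → 0 ≤ t → ∀ a : A, α (s + t) a = α s (α t a))
    (x y : Γ) (a b : A) :
    mu α x a * mu α y b = mu α (x ⊔ y) (α (x ⊔ y - x) a * α (x ⊔ y - y) b) := by
  apply lp.ext
  rw [lp.infty_coeFn_mul]
  funext z
  simp only [Pi.mul_apply, mu_apply]
  by_cases hx : x ≤ z
  · by_cases hy : y ≤ z
    · rw [if_pos hx, if_pos hy, if_pos (sup_le hx hy), map_mul]
      congr 1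
      · rw [← hαadd _ _ (sub_nonneg.2 (sup_le hx hy)) (sub_nonneg.2 le_sup_left) a,
          sub_add_sub_cancel]
      · rw [← hαadd _ _ (sub_nonneg.2 (sup_le hx hy)) (sub_nonneg.2 le_sup_right) b,
          sub_add_sub_cancel]
    · rw [if_neg hy, mul_zero, if_neg fun h => hy (le_trans le_sup_right h)]
  · rw [if_neg hx, zero_mul, if_neg fun h => hx (le_trans le_sup_left h)]

/-- Composition rule for the semigroup. -/
theorem alpha_comp (α : Γ → (A →⋆ₙₐ[ℂ] A))
    (hαadd : ∀ s t : Γ, 0 ≤ s → 0 ≤ t → ∀ a : A, α (s + t) a = α s (α t a))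
    {x y z : Γ} (hxy : x ≤ y) (hyz : y ≤ z) (a : A) :
    α (z - x) a = α (z - y) (α (y - x) a) := by
  rw [← hαadd _ _ (sub_nonneg.2 hyz) (sub_nonneg.2 hxy) a, sub_add_sub_cancel]

theorem ISet_is_ideal_of_BSet
    {Γ : Type*} [AddCommGroup Γ] [LinearOrder Γ] [IsOrderedAddMonoid Γ] {A : Type*} [NonUnitalCStarAlgebra A]
    (α : Γ → (A →⋆ₙₐ[ℂ] A))
    (hα0 : ∀ a : A, α 0 a = a)
    (hαadd : ∀ s t : Γ, 0 ≤ s → 0 ≤ t → ∀ a : A, α (s + t) a = α s (α t a)) :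
    ISet α ⊆ BSet α ∧
    (∀ ξ ∈ BSet α, ∀ η ∈ ISet α, ξ * η ∈ ISet α ∧ η * ξ ∈ ISet α) := by
  set S : Set (lp (fun _ : Γ => A) ∞) := {ξ | ∃ x a, ξ = mu α x a} with hS
  set T : Set (lp (fun _ : Γ => A) ∞) :=
    {ξ | ∃ x y a, x < y ∧ ξ = mu α x a - mu α y (α (y - x) a)} with hT
  set M := Submodule.span ℂ S with hM
  set N := Submodule.span ℂ T with hN
  have gen_mem : ∀ (x y : Γ), x < y → ∀ a : A,
      mu α x a - mu α y (α (y - x) a) ∈ N :=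
    fun x y h a => Submodule.subset_span ⟨x, y, a, h, rfl⟩
  -- the key computations on generators
  have mul_gen_left : ∀ (x : Γ) (a : A) (y z : Γ), y < z → ∀ b : A,
      mu α x a * (mu α y b - mu α z (α (z - y) b)) ∈ N := by
    intro x a y z hyz b
    rw [mul_sub, mu_mul α hαadd, mu_mul α hαadd]
    rcases le_or_gt x y with hxy | hyx
    · have hxz : x ≤ z := hxy.trans hyz.le
      simp only [sup_eq_right.2 hxy, sup_eq_right.2 hxz, sub_self, hα0]
      rw [alpha_comp α hαadd hxy hyz.le a, ← map_mul]
      exact gen_mem y z hyz _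
    · rcases le_or_gt x z with hxz | hzx
      · simp only [sup_eq_left.2 hyx.le, sup_eq_right.2 hxz, sub_self, hα0]
        rw [alpha_comp α hαadd hyx.le hxz b, ← map_mul]
        rcases eq_or_lt_of_le hxz with rfl | hlt
        · simp only [sub_self, hα0]; exact N.zero_mem
        · exact gen_mem x z hlt _
      · simp only [sup_eq_left.2 hyx.le, sup_eq_left.2 hzx.le, sub_self, hα0]
        rw [← alpha_comp α hαadd hyz.le hzx.le b, sub_self]
        exact N.zero_mem
  have mul_gen_right : ∀ (x : Γ) (a : A) (y z : Γ), y < z → ∀ b : A,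
      (mu α y b - mu α z (α (z - y) b)) * mu α x a ∈ N := by
    intro x a y z hyz b
    rw [sub_mul, mu_mul α hαadd, mu_mul α hαadd]
    rcases le_or_gt x y with hxy | hyx
    · have hxz : x ≤ z := hxy.trans hyz.le
      simp only [sup_comm, sup_eq_right.2 hxy, sup_eq_right.2 hxz, sub_self, hα0]
      rw [alpha_comp α hαadd hxy hyz.le a, ← map_mul]
      exact gen_mem y z hyz _
    · rcases le_or_gt x z with hxz | hzx
      · simp only [sup_comm, sup_eq_left.2 hyx.le, sup_eq_right.2 hxz, sub_self, hα0]
        rw [alpha_comp α hαadd hyx.le hxz b, ← map_mul]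
        rcases eq_or_lt_of_le hxz with rfl | hlt
        · simp only [sub_self, hα0]; exact N.zero_mem
        · exact gen_mem x z hlt _
      · simp only [sup_comm, sup_eq_left.2 hyx.le, sup_eq_left.2 hzx.le, sub_self, hα0]
        rw [← alpha_comp α hαadd hyz.le hzx.le b, sub_self]
        exact N.zero_mem
  -- extend to spans
  have key : ∀ ξ ∈ M, ∀ η ∈ N, ξ * η ∈ N ∧ η * ξ ∈ N := by
    intro ξ hξ
    refine Submodule.span_induction (p := fun ξ _ => ∀ η ∈ N, ξ * η ∈ N ∧ η * ξ ∈ N)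
      ?_ ?_ ?_ ?_ hξ
    · rintro _ ⟨x, a, rfl⟩ η hη
      refine Submodule.span_induction
        (p := fun η _ => mu α x a * η ∈ N ∧ η * mu α x a ∈ N) ?_ ?_ ?_ ?_ hη
      · rintro _ ⟨y, z, b, hyz, rfl⟩
        exact ⟨mul_gen_left x a y z hyz b, mul_gen_right x a y z hyz b⟩
      · show mu α x a * 0 ∈ N ∧ 0 * mu α x a ∈ N
        rw [mul_zero, zero_mul]; exact ⟨N.zero_mem, N.zero_mem⟩
      · intro u v _ _ hu hv
        show mu α x a * (u + v) ∈ N ∧ (u + v) * mu α x a ∈ N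
        rw [mul_add, add_mul]; exact ⟨N.add_mem hu.1 hv.1, N.add_mem hu.2 hv.2⟩
      · intro c u _ hu
        show mu α x a * (c • u) ∈ N ∧ (c • u) * mu α x a ∈ N
        rw [mul_smul_comm, smul_mul_assoc]
        exact ⟨N.smul_mem c hu.1, N.smul_mem c hu.2⟩
    · intro η hη
      show (0 : lp (fun _ : Γ => A) ∞) * η ∈ N ∧ η * 0 ∈ N
      rw [zero_mul, mul_zero]; exact ⟨N.zero_mem, N.zero_mem⟩
    · intro u v _ _ hu hv η hη
      show (u + v) * η ∈ N ∧ η * (u + v) ∈ N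
      rw [add_mul, mul_add]
      exact ⟨N.add_mem (hu η hη).1 (hv η hη).1, N.add_mem (hu η hη).2 (hv η hη).2⟩
    · intro c u _ hu η hη
      show (c • u) * η ∈ N ∧ η * (c • u) ∈ N
      rw [smul_mul_assoc, mul_smul_comm]
      exact ⟨N.smul_mem c (hu η hη).1, N.smul_mem c (hu η hη).2⟩
  have hNM : (N : Set (lp (fun _ : Γ => A) ∞)) ⊆ (M : Set _) := by
    apply Submodule.span_le.2
    rintro _ ⟨x, y, a, _, rfl⟩
    exact M.sub_mem (Submodule.subset_span ⟨x, a, rfl⟩)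
      (Submodule.subset_span ⟨y, α (y - x) a, rfl⟩)
  constructor
  · exact closure_mono hNM
  · intro ξ hξ η hη
    have hξ' : ξ ∈ closure (M : Set _) := hξ
    have hη' : η ∈ closure (N : Set _) := hη
    constructor
    · exact map_mem_closure₂ continuous_mul hξ' hη'
        (fun u hu v hv => (key u hu v hv).1)
    · exact map_mem_closure₂ continuous_mul hη' hξ'
        (fun u hu v hv => (key v hv u hu).2)
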